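/- Let α > -1, q > 0, v > 0, and suppose (α+1)/q < (β+1)/v for some β > -1. If h : (0,∞) → [0,∞) is decreasing and ∫_0^∞ h(σ)^q dμ_α(σ) < ∞, then ∫_0^∞ h(σ)^v dμ_β(σ) < ∞. -/

import Mathlib

open MeasureTheory

/-- Sufficiency part (i) of the embedding theorem, abstract form: if `(α+1)/q < (β+1)/v`
and `h : (0,∞) → [0,∞)` is decreasing with `∫_0^∞ h(σ)^q dμ_α(σ) < ∞`, then
`∫_0^∞ h(σ)^v dμ_β(σ) < ∞`. -/
theorem embedding_strict (α β q v : ℝ) (hα : -1 < α) (hβ : -1 < β)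
    (hq : 0 < q) (hv : 0 < v) (hlt : (α + 1) / q < (β + 1) / v)
    (h : ℝ → ℝ) (hmono : AntitoneOn h (Set.Ioi 0)) (hpos : ∀ σ, 0 ≤ h σ)
    (hfin : (∫⁻ σ in Set.Ioi (0 : ℝ),
        ENNReal.ofReal (h σ ^ q *
          ((2 ^ (α + 1) / Real.Gamma (α + 1)) * σ ^ α * Real.exp (-2 * σ)))) < ⊤) :
    (∫⁻ σ in Set.Ioi (0 : ℝ),
        ENNReal.ofReal (h σ ^ v *
          ((2 ^ (β + 1) / Real.Gamma (β + 1)) * σ ^ β * Real.exp (-2 * σ)))) < ⊤ := by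
  have hα1 : (0:ℝ) < α + 1 := by linarith
  have hβ1 : (0:ℝ) < β + 1 := by linarith
  have hΓβ : 0 < Real.Gamma (β + 1) := Real.Gamma_pos_of_pos hβ1
  have hkβ : 0 < (2:ℝ) ^ (β + 1) / Real.Gamma (β + 1) :=
    div_pos (Real.rpow_pos_of_pos two_pos _) hΓβ
  set γ := (α + 1) / q with hγdef
  -- Step 1: pointwise bound `h σ ≤ C σ^(-γ)` on `(0, 1]`.
  obtain ⟨C, hC0, hCb⟩ : ∃ C : ℝ, 0 ≤ C ∧ ∀ σ ∈ Set.Ioc (0:ℝ) 1, h σ ≤ C * σ ^ (-γ) := by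
    have hΓα : 0 < Real.Gamma (α + 1) := Real.Gamma_pos_of_pos hα1
    set K := (2:ℝ) ^ (α + 1) / Real.Gamma (α + 1) * min ((2:ℝ) ^ (-α)) 1 * Real.exp (-2)
      with hKdef
    have hK : 0 < K := by
      refine mul_pos (mul_pos (div_pos (Real.rpow_pos_of_pos two_pos _) hΓα) ?_)
        (Real.exp_pos _)
      exact lt_min (Real.rpow_pos_of_pos two_pos _) one_pos
    set M := ∫⁻ σ in Set.Ioi (0 : ℝ), ENNReal.ofReal (h σ ^ q *
        ((2 ^ (α + 1) / Real.Gamma (α + 1)) * σ ^ α * Real.exp (-2 * σ))) with hMdef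
    have hM : M ≠ ⊤ := hfin.ne
    have key : ∀ σ ∈ Set.Ioc (0:ℝ) 1, h σ ^ q * (K * σ ^ (α + 1) / 2) ≤ M.toReal := by
      intro σ hσ
      obtain ⟨hσ0, hσ1⟩ := hσ
      rw [← ENNReal.ofReal_le_iff_le_toReal hM]
      have hσα : (0:ℝ) ≤ σ ^ α := Real.rpow_nonneg hσ0.le _
      calc ENNReal.ofReal (h σ ^ q * (K * σ ^ (α + 1) / 2))
          = ENNReal.ofReal (h σ ^ q * (K * σ ^ α)) * ENNReal.ofReal (σ - σ / 2) := by
            rw [← ENNReal.ofReal_mul (by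
              exact mul_nonneg (Real.rpow_nonneg (hpos σ) _) (mul_nonneg hK.le hσα))]
            congr 1
            rw [Real.rpow_add_one hσ0.ne']
            ring
        _ = ∫⁻ _ in Set.Ioc (σ/2) σ, ENNReal.ofReal (h σ ^ q * (K * σ ^ α)) := by
            rw [setLIntegral_const, Real.volume_Ioc, mul_comm]
        _ ≤ ∫⁻ t in Set.Ioc (σ/2) σ, ENNReal.ofReal (h t ^ q *
              ((2 ^ (α + 1) / Real.Gamma (α + 1)) * t ^ α * Real.exp (-2 * t))) := by
            apply setLIntegral_mono' measurableSet_Ioc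
            intro t ht
            obtain ⟨ht1, ht2⟩ := ht
            have ht0 : 0 < t := lt_trans (by positivity) ht1
            apply ENNReal.ofReal_le_ofReal
            have hhq : h σ ^ q ≤ h t ^ q := Real.rpow_le_rpow (hpos σ)
              (hmono (Set.mem_Ioi.mpr ht0) (Set.mem_Ioi.mpr hσ0) ht2) hq.le
            have h1 : min ((2:ℝ) ^ (-α)) 1 * σ ^ α ≤ t ^ α := by
              rcases le_or_gt 0 α with hα0 | hα0
              · calc min ((2:ℝ) ^ (-α)) 1 * σ ^ α ≤ 2 ^ (-α) * σ ^ α :=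
                    mul_le_mul_of_nonneg_right (min_le_left _ _) hσα
                  _ = (σ / 2) ^ α := by
                    rw [Real.div_rpow hσ0.le two_pos.le, Real.rpow_neg two_pos.le,
                      div_eq_mul_inv, mul_comm]
                  _ ≤ t ^ α := Real.rpow_le_rpow (by positivity) ht1.le hα0
              · calc min ((2:ℝ) ^ (-α)) 1 * σ ^ α ≤ 1 * σ ^ α :=
                    mul_le_mul_of_nonneg_right (min_le_right _ _) hσα
                  _ = σ ^ α := one_mul _
                  _ ≤ t ^ α := Real.rpow_le_rpow_of_nonpos ht0 ht2 hα0.le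
            have h2 : Real.exp (-2) ≤ Real.exp (-2 * t) :=
              Real.exp_le_exp.mpr (by nlinarith)
            have hdens : K * σ ^ α ≤
                (2 ^ (α + 1) / Real.Gamma (α + 1)) * t ^ α * Real.exp (-2 * t) := by
              have e1 : K * σ ^ α = (2 ^ (α + 1) / Real.Gamma (α + 1)) *
                  (min ((2:ℝ) ^ (-α)) 1 * σ ^ α) * Real.exp (-2) := by rw [hKdef]; ring
              rw [e1]
              apply mul_le_mul (mul_le_mul_of_nonneg_left h1
                (div_nonneg (Real.rpow_nonneg two_pos.le _) hΓα.le)) h2 (Real.exp_pos _).le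
              exact mul_nonneg (div_nonneg (Real.rpow_nonneg two_pos.le _) hΓα.le)
                (Real.rpow_nonneg ht0.le _)
            exact mul_le_mul hhq hdens (mul_nonneg hK.le hσα)
              (Real.rpow_nonneg (hpos t) _)
        _ ≤ M := by
            rw [hMdef]
            apply lintegral_mono_set
            intro x hx
            exact Set.mem_Ioi.mpr (lt_trans (by positivity) hx.1)
    refine ⟨(2 * M.toReal / K) ^ q⁻¹,
      Real.rpow_nonneg (div_nonneg (by positivity) hK.le) _, ?_⟩
    intro σ hσ
    have hσ0 := hσ.1
    have hσp : 0 < σ ^ (α + 1) := Real.rpow_pos_of_pos hσ0 _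
    have h1 : h σ ^ q ≤ (2 * M.toReal / K) * σ ^ (-(α + 1)) := by
      have h2 : h σ ^ q ≤ M.toReal / (K * σ ^ (α + 1) / 2) :=
        (le_div_iff₀ (div_pos (mul_pos hK hσp) two_pos)).mpr (key σ hσ)
      calc h σ ^ q ≤ M.toReal / (K * σ ^ (α + 1) / 2) := h2
        _ = (2 * M.toReal / K) * (σ ^ (α + 1))⁻¹ := by field_simp
        _ = (2 * M.toReal / K) * σ ^ (-(α + 1)) := by rw [Real.rpow_neg hσ0.le]
    calc h σ = (h σ ^ q) ^ q⁻¹ := (Real.rpow_rpow_inv (hpos σ) hq.ne').symm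
      _ ≤ ((2 * M.toReal / K) * σ ^ (-(α + 1))) ^ q⁻¹ :=
        Real.rpow_le_rpow (Real.rpow_nonneg (hpos σ) _) h1 (by positivity)
      _ = (2 * M.toReal / K) ^ q⁻¹ * σ ^ (-γ) := by
        rw [Real.mul_rpow (div_nonneg (by positivity) hK.le) (Real.rpow_nonneg hσ0.le _),
          ← Real.rpow_mul hσ0.le,
          show -(α + 1) * q⁻¹ = -γ by rw [hγdef, div_eq_mul_inv]; ring]
  -- Step 2: split the integral and bound each piece.
  have hp : (-1:ℝ) < β - v * γ := by
    have := (lt_div_iff₀ hv).mp hlt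
    nlinarith
  rw [← Set.Ioc_union_Ioi_eq_Ioi (zero_le_one (α := ℝ)),
    lintegral_union measurableSet_Ioi (Set.Ioc_disjoint_Ioi le_rfl)]
  have piece1 : (∫⁻ σ in Set.Ioc (0:ℝ) 1, ENNReal.ofReal (h σ ^ v *
      ((2 ^ (β + 1) / Real.Gamma (β + 1)) * σ ^ β * Real.exp (-2 * σ)))) < ⊤ := by
    have hint : IntegrableOn
        (fun σ : ℝ => C ^ v * (2 ^ (β + 1) / Real.Gamma (β + 1)) * σ ^ (β - v * γ))
        (Set.Ioc 0 1) := by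
      apply Integrable.const_mul
      exact Iff.mpr integrableOn_Ioc_iff_integrableOn_Ioo
        ((intervalIntegral.integrableOn_Ioo_rpow_iff one_pos).mpr hp)
    calc (∫⁻ σ in Set.Ioc (0:ℝ) 1, ENNReal.ofReal (h σ ^ v *
          ((2 ^ (β + 1) / Real.Gamma (β + 1)) * σ ^ β * Real.exp (-2 * σ))))
        ≤ ∫⁻ σ in Set.Ioc (0:ℝ) 1, ENNReal.ofReal
            (C ^ v * (2 ^ (β + 1) / Real.Gamma (β + 1)) * σ ^ (β - v * γ)) := by
          apply setLIntegral_mono' measurableSet_Ioc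
          intro σ hσ
          obtain ⟨hσ0, hσ1⟩ := hσ
          apply ENNReal.ofReal_le_ofReal
          have hσβ : (0:ℝ) ≤ σ ^ β := Real.rpow_nonneg hσ0.le _
          have hv1 : h σ ^ v ≤ (C * σ ^ (-γ)) ^ v :=
            Real.rpow_le_rpow (hpos σ) (hCb σ ⟨hσ0, hσ1⟩) hv.le
          have he : Real.exp (-2 * σ) ≤ 1 := Real.exp_le_one_iff.mpr (by nlinarith)
          calc h σ ^ v * ((2 ^ (β + 1) / Real.Gamma (β + 1)) * σ ^ β * Real.exp (-2 * σ))
              ≤ (C * σ ^ (-γ)) ^ v * ((2 ^ (β + 1) / Real.Gamma (β + 1)) * σ ^ β * 1) := by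
                apply mul_le_mul hv1 (mul_le_mul_of_nonneg_left he (mul_nonneg hkβ.le hσβ))
                  (mul_nonneg (mul_nonneg hkβ.le hσβ) (Real.exp_pos _).le)
                  (Real.rpow_nonneg (mul_nonneg hC0 (Real.rpow_nonneg hσ0.le _)) _)
            _ = C ^ v * (2 ^ (β + 1) / Real.Gamma (β + 1)) * σ ^ (β - v * γ) := by
                rw [Real.mul_rpow hC0 (Real.rpow_nonneg hσ0.le _),
                  ← Real.rpow_mul hσ0.le, mul_one,
                  show β - v * γ = -γ * v + β by ring, Real.rpow_add hσ0]
                ring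
      _ < ⊤ := hint.lintegral_lt_top
  have piece2 : (∫⁻ σ in Set.Ioi (1:ℝ), ENNReal.ofReal (h σ ^ v *
      ((2 ^ (β + 1) / Real.Gamma (β + 1)) * σ ^ β * Real.exp (-2 * σ)))) < ⊤ := by
    have hint : IntegrableOn
        (fun σ : ℝ => (h 1 ^ v * (2 ^ (β + 1) / Real.Gamma (β + 1))) *
          (Real.exp (-σ) * σ ^ β)) (Set.Ioi 1) := by
      apply Integrable.const_mul
      have := Real.GammaIntegral_convergent hβ1
      simp only [add_sub_cancel_right] at this
      exact this.mono_set (Set.Ioi_subset_Ioi zero_le_one)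
    calc (∫⁻ σ in Set.Ioi (1:ℝ), ENNReal.ofReal (h σ ^ v *
          ((2 ^ (β + 1) / Real.Gamma (β + 1)) * σ ^ β * Real.exp (-2 * σ))))
        ≤ ∫⁻ σ in Set.Ioi (1:ℝ), ENNReal.ofReal
            ((h 1 ^ v * (2 ^ (β + 1) / Real.Gamma (β + 1))) * (Real.exp (-σ) * σ ^ β)) := by
          apply setLIntegral_mono' measurableSet_Ioi
          intro σ hσ
          have hσ1 : (1:ℝ) < σ := hσ
          have hσ0 : 0 < σ := lt_trans one_pos hσ1
          apply ENNReal.ofReal_le_ofReal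
          have hσβ : (0:ℝ) ≤ σ ^ β := Real.rpow_nonneg hσ0.le _
          have hhv : h σ ^ v ≤ h 1 ^ v := Real.rpow_le_rpow (hpos σ)
            (hmono (Set.mem_Ioi.mpr one_pos) (Set.mem_Ioi.mpr hσ0) hσ1.le) hv.le
          have he : Real.exp (-2 * σ) ≤ Real.exp (-σ) :=
            Real.exp_le_exp.mpr (by linarith)
          calc h σ ^ v * ((2 ^ (β + 1) / Real.Gamma (β + 1)) * σ ^ β * Real.exp (-2 * σ))
              ≤ h 1 ^ v * ((2 ^ (β + 1) / Real.Gamma (β + 1)) * σ ^ β * Real.exp (-σ)) :=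
                mul_le_mul hhv (mul_le_mul_of_nonneg_left he (mul_nonneg hkβ.le hσβ))
                  (mul_nonneg (mul_nonneg hkβ.le hσβ) (Real.exp_pos _).le)
                  (Real.rpow_nonneg (hpos 1) _)
            _ = (h 1 ^ v * (2 ^ (β + 1) / Real.Gamma (β + 1))) * (Real.exp (-σ) * σ ^ β) := by
                ring
      _ < ⊤ := hint.lintegral_lt_top
  exact ENNReal.add_lt_top.mpr ⟨piece1, piece2⟩
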